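/- Let A = [a,b] ⊂ ℝ be a compact interval with a < b, let η > 0, let D ≥ 1, let u : A → ℝ be bounded and measurable with logit density l, and let p be a class-D density on A. Define p_t = p + t(l − p) and f(t) = ∫_A u(x) p_t(x) dx + η ν(p_t). Then f has derivative at t = 0 equal to f'(0) = η (KL(l‖p) + KL(p‖l)); in particular f'(0) ≥ 0, with f'(0) = 0 if and only if p = l Lebesgue-almost everywhere. -/

import Mathlib

open MeasureTheory Set

/-- The logit density with noise level `η` of a payoff function `u` on the
compact interval `A = [a, b]`:  `l(x) = exp(u(x)/η) / ∫_A exp(u(y)/η) dy`. -/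
noncomputable def logitDensity (a b η : ℝ) (u : ℝ → ℝ) (x : ℝ) : ℝ :=
  Real.exp (u x / η) / ∫ y in Icc a b, Real.exp (u y / η)

/-- `p` is a class-`D` density on `[a,b]`: `D⁻¹ ≤ p ≤ D` on `[a,b]`, `p` is
`D`-Lipschitz on `[a,b]`, and `∫_{[a,b]} p = 1`. -/
def IsClassDDensity (a b D : ℝ) (p : ℝ → ℝ) : Prop :=
  (∀ x ∈ Icc a b, D⁻¹ ≤ p x ∧ p x ≤ D) ∧
    (∀ x ∈ Icc a b, ∀ y ∈ Icc a b, |p x - p y| ≤ D * |x - y|) ∧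
    (∫ x in Icc a b, p x) = 1

/-- The Kullback–Leibler divergence `KL(p‖q) = ∫_{[a,b]} p log(p/q)` between
densities `p`, `q` on the compact interval `[a,b]`. -/
noncomputable def klDiv' (a b : ℝ) (p q : ℝ → ℝ) : ℝ :=
  ∫ x in Icc a b, p x * Real.log (p x / q x)

lemma integrableOn_of_bdd {a b C : ℝ} {f : ℝ → ℝ}
    (hf : AEStronglyMeasurable f (volume.restrict (Icc a b)))
    (h : ∀ x ∈ Icc a b, |f x| ≤ C) : IntegrableOn f (Icc a b) := by
  have hc : IntegrableOn (fun _ : ℝ => C) (Icc a b) :=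
    integrableOn_const measure_Icc_lt_top.ne
  exact hc.integrable.mono' hf ((ae_restrict_iff' measurableSet_Icc).2
    (ae_of_all _ fun x hx => by simpa [Real.norm_eq_abs] using h x hx))

/-- Let `u` be bounded measurable on `[a,b]` with logit density `l`, let `p` be a
class-`D` density, and set `p_t = p + t(l - p)` and
`f(t) = ∫ u p_t + η ν(p_t)` where `ν(p_t) = -∫ p_t log p_t`.  Then
`f'(0) = η (KL(l‖p) + KL(p‖l)) ≥ 0`, with equality iff `p = l` Lebesgue-a.e. -/
theorem stmt_12 {a b η D M : ℝ} (hab : a < b) (hη : 0 < η) (hD : 1 ≤ D)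
    {u : ℝ → ℝ} (humeas : Measurable u) (hbd : ∀ x ∈ Icc a b, |u x| ≤ M)
    {p : ℝ → ℝ} (hp : IsClassDDensity a b D p)
    (l : ℝ → ℝ) (hl : l = logitDensity a b η u) :
    HasDerivAt
        (fun t : ℝ =>
          (∫ x in Icc a b, u x * (p x + t * (l x - p x))) +
            η * -∫ x in Icc a b,
              (p x + t * (l x - p x)) * Real.log (p x + t * (l x - p x)))
        (η * (klDiv' a b l p + klDiv' a b p l)) 0 ∧
      0 ≤ η * (klDiv' a b l p + klDiv' a b p l) ∧
      (η * (klDiv' a b l p + klDiv' a b p l) = 0 ↔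
        p =ᵐ[volume.restrict (Icc a b)] l) := by
  obtain ⟨hpb, hplip, hpint⟩ := hp
  have hM : 0 ≤ M := le_trans (abs_nonneg _) (hbd a ⟨le_refl a, hab.le⟩)
  set Z := ∫ y in Icc a b, Real.exp (u y / η) with hZdef
  have hmeasE : Measurable fun y => Real.exp (u y / η) := (humeas.div_const η).exp
  have hintE : IntegrableOn (fun y => Real.exp (u y / η)) (Icc a b) := by
    apply integrableOn_of_bdd (hmeasE.aestronglyMeasurable) (C := Real.exp (M / η))
    intro x hx
    rw [abs_of_pos (Real.exp_pos _)]
    exact Real.exp_le_exp.2 (by gcongr; exact (abs_le.1 (hbd x hx)).2)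
  have hZlb : (b - a) * Real.exp (-M / η) ≤ Z := by
    have h2 : ∀ x ∈ Icc a b, Real.exp (-M / η) ≤ Real.exp (u x / η) := fun x hx =>
      Real.exp_le_exp.2 (by gcongr; exact (abs_le.1 (hbd x hx)).1)
    calc (b - a) * Real.exp (-M / η)
        = ∫ _ in Icc a b, Real.exp (-M / η) := by
          rw [setIntegral_const, measureReal_def, Real.volume_Icc, ENNReal.toReal_ofReal (by linarith), smul_eq_mul]
      _ ≤ Z := setIntegral_mono_on (integrableOn_const measure_Icc_lt_top.ne) hintE
          measurableSet_Icc h2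
  have hZpos : 0 < Z := lt_of_lt_of_le (mul_pos (by linarith) (Real.exp_pos _)) hZlb
  have hld : ∀ x, l x = Real.exp (u x / η) / Z := by intro x; rw [hl]; rfl
  have hlmeas : Measurable l := by rw [hl]; exact hmeasE.div_const Z
  have hDpos : (0:ℝ) < D := lt_of_lt_of_le one_pos hD
  -- global constants
  set c : ℝ := min D⁻¹ (Real.exp (-M / η) / Z) with hcdef
  set C : ℝ := max D (Real.exp (M / η) / Z) with hCdef
  have hc : 0 < c := lt_min (by positivity) (by positivity)
  have hCpos : 0 < C := lt_of_lt_of_le hDpos (le_max_left _ _)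
  have hcC : c ≤ C := le_trans (min_le_left _ _)
    (le_trans (by rw [inv_le_iff_one_le_mul₀ hDpos]; nlinarith) (le_max_left _ _))
  have hlbc : ∀ x ∈ Icc a b, c ≤ l x ∧ l x ≤ C := by
    intro x hx
    rw [hld]
    constructor
    · exact le_trans (min_le_right _ _)
        ((div_le_div_iff_of_pos_right hZpos).2 (Real.exp_le_exp.2 (by gcongr; exact (abs_le.1 (hbd x hx)).1)))
    · exact le_trans
        ((div_le_div_iff_of_pos_right hZpos).2 (Real.exp_le_exp.2 (by gcongr; exact (abs_le.1 (hbd x hx)).2)))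
        (le_max_right _ _)
  have hpbc : ∀ x ∈ Icc a b, c ≤ p x ∧ p x ≤ C := fun x hx =>
    ⟨le_trans (min_le_left _ _) (hpb x hx).1, le_trans (hpb x hx).2 (le_max_left _ _)⟩
  have hlpC : ∀ x ∈ Icc a b, |l x - p x| ≤ C := by
    intro x hx
    have h1 := hlbc x hx; have h2 := hpbc x hx
    exact abs_le.2 ⟨by linarith, by linarith⟩
  set ε : ℝ := c / (2 * C) with hεdef
  have hε : 0 < ε := div_pos hc (by positivity)
  have hεC : ε * C = c / 2 := by rw [hεdef]; field_simp
  have key : ∀ t ∈ Metric.ball (0:ℝ) ε, ∀ x ∈ Icc a b,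
      c / 2 ≤ p x + t * (l x - p x) ∧ p x + t * (l x - p x) ≤ 2 * C := by
    intro t ht x hx
    have h1 : |t| < ε := by simpa [Real.dist_eq] using ht
    have h2 : |t * (l x - p x)| ≤ c / 2 := by
      rw [abs_mul]
      calc |t| * |l x - p x| ≤ ε * C :=
            mul_le_mul h1.le (hlpC x hx) (abs_nonneg _) hε.le
        _ = c / 2 := hεC
    have h3 := abs_le.1 h2
    have h4 := hpbc x hx
    constructor <;> [linarith [h4.1, h3.1]; linarith [h4.2, h3.2, hcC]]
  set L : ℝ := |Real.log (c / 2)| + |Real.log (2 * C)| with hLdef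
  have hlogbd : ∀ y : ℝ, c / 2 ≤ y → y ≤ 2 * C → |Real.log y| ≤ L := by
    intro y h1 h2
    have hy : 0 < y := lt_of_lt_of_le (by linarith) h1
    rw [abs_le]
    constructor
    · have := Real.log_le_log (by linarith) h1
      have h5 := neg_abs_le (Real.log (c / 2))
      have h6 := abs_nonneg (Real.log (2 * C))
      simp only [hLdef]; linarith
    · have := Real.log_le_log hy h2
      have h5 := le_abs_self (Real.log (2 * C))
      have h6 := abs_nonneg (Real.log (c / 2))
      simp only [hLdef]; linarith
  -- measurability of p
  have hpmeas : AEStronglyMeasurable p (volume.restrict (Icc a b)) := by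
    have hlip : LipschitzOnWith (Real.toNNReal D) p (Icc a b) := by
      rw [lipschitzOnWith_iff_dist_le_mul]
      intro x hx y hy
      rw [Real.dist_eq, Real.dist_eq, Real.coe_toNNReal D hDpos.le]
      exact hplip x hx y hy
    exact hlip.continuousOn.aestronglyMeasurable measurableSet_Icc
  have hqam : ∀ t : ℝ, AEMeasurable (fun x => p x + t * (l x - p x))
      (volume.restrict (Icc a b)) := fun t =>
    hpmeas.aemeasurable.add ((hlmeas.aemeasurable.sub hpmeas.aemeasurable).const_mul t)
  -- pointwise derivative
  have hderiv : ∀ x ∈ Icc a b, ∀ t ∈ Metric.ball (0:ℝ) ε,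
      HasDerivAt (fun s => (p x + s * (l x - p x)) * Real.log (p x + s * (l x - p x)))
        ((l x - p x) * (Real.log (p x + t * (l x - p x)) + 1)) t := by
    intro x hx t ht
    have hq := key t ht x hx
    have hqpos : 0 < p x + t * (l x - p x) := lt_of_lt_of_le (by linarith) hq.1
    have h1 : HasDerivAt (fun s : ℝ => p x + s * (l x - p x)) (l x - p x) t :=
      (hasDerivAt_mul_const _).const_add _
    have h2 := h1.fun_mul (h1.log hqpos.ne')
    refine h2.congr_deriv ?_
    rw [mul_div_assoc', mul_div_right_comm, div_self hqpos.ne', one_mul]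
    ring
  -- measurability of integrands
  have hFmeas : ∀ t : ℝ, AEStronglyMeasurable
      (fun x => (p x + t * (l x - p x)) * Real.log (p x + t * (l x - p x)))
      (volume.restrict (Icc a b)) := fun t =>
    ((hqam t).mul (Real.measurable_log.comp_aemeasurable (hqam t))).aestronglyMeasurable
  have hF'meas : AEStronglyMeasurable
      (fun x => (l x - p x) * (Real.log (p x + 0 * (l x - p x)) + 1))
      (volume.restrict (Icc a b)) :=
    ((hlmeas.aemeasurable.sub hpmeas.aemeasurable).mul
      ((Real.measurable_log.comp_aemeasurable (hqam 0)).add_const 1)).aestronglyMeasurable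
  have hball0 : (0:ℝ) ∈ Metric.ball (0:ℝ) ε := Metric.mem_ball_self hε
  have hFint0 : IntegrableOn
      (fun x => (p x + 0 * (l x - p x)) * Real.log (p x + 0 * (l x - p x))) (Icc a b) := by
    apply integrableOn_of_bdd (hFmeas 0) (C := 2 * C * L)
    intro x hx
    have hq := key 0 hball0 x hx
    rw [abs_mul]
    have h2 := hlogbd _ hq.1 hq.2
    have h3 : |p x + 0 * (l x - p x)| ≤ 2 * C := abs_le.2 ⟨by linarith, hq.2⟩
    exact mul_le_mul h3 h2 (abs_nonneg _) (by positivity)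
  have hLnn : 0 ≤ L := by positivity
  -- the dominated-derivative theorem
  have HD2 := hasDerivAt_integral_of_dominated_loc_of_deriv_le (μ := volume.restrict (Icc a b))
    (F := fun t x => (p x + t * (l x - p x)) * Real.log (p x + t * (l x - p x)))
    (F' := fun t x => (l x - p x) * (Real.log (p x + t * (l x - p x)) + 1))
    (bound := fun _ => C * (L + 1)) (x₀ := 0) (Metric.ball_mem_nhds 0 hε)
    (Filter.Eventually.of_forall fun t => hFmeas t) hFint0 hF'meas
    ((ae_restrict_iff' measurableSet_Icc).2 (ae_of_all _ fun x hx t ht => by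
      have hq := key t ht x hx
      rw [Real.norm_eq_abs, abs_mul]
      have h2 := hlogbd _ hq.1 hq.2
      have h3 : |Real.log (p x + t * (l x - p x)) + 1| ≤ L + 1 :=
        le_trans (abs_add_le _ _) (by simp; linarith)
      exact mul_le_mul (hlpC x hx) h3 (abs_nonneg _) hCpos.le))
    (integrableOn_const measure_Icc_lt_top.ne)
    ((ae_restrict_iff' measurableSet_Icc).2 (ae_of_all _ fun x hx t ht => hderiv x hx t ht))
  -- first integral: affine in t
  have hint_up : IntegrableOn (fun x => u x * p x) (Icc a b) := by
    apply integrableOn_of_bdd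
      ((humeas.aemeasurable.mul hpmeas.aemeasurable).aestronglyMeasurable) (C := M * C)
    intro x hx
    rw [Pi.mul_apply, abs_mul]
    exact mul_le_mul (hbd x hx) (abs_le.2 ⟨by linarith [(hpbc x hx).1], (hpbc x hx).2⟩)
      (abs_nonneg _) hM
  have hint_ulp : IntegrableOn (fun x => u x * (l x - p x)) (Icc a b) := by
    apply integrableOn_of_bdd
      ((humeas.aemeasurable.mul
        (hlmeas.aemeasurable.sub hpmeas.aemeasurable)).aestronglyMeasurable) (C := M * C)
    intro x hx
    rw [Pi.mul_apply, abs_mul]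
    exact mul_le_mul (hbd x hx) (hlpC x hx) (abs_nonneg _) hM
  have hI1 : ∀ t : ℝ, (∫ x in Icc a b, u x * (p x + t * (l x - p x)))
      = (∫ x in Icc a b, u x * p x) + t * ∫ x in Icc a b, u x * (l x - p x) := by
    intro t
    rw [← integral_const_mul, ← integral_add hint_up (hint_ulp.const_mul t)]
    exact setIntegral_congr_fun measurableSet_Icc (fun x hx => by ring)
  have hd1 : HasDerivAt (fun t : ℝ => ∫ x in Icc a b, u x * (p x + t * (l x - p x)))
      (∫ x in Icc a b, u x * (l x - p x)) 0 := by
    have h := (hasDerivAt_mul_const (∫ x in Icc a b, u x * (l x - p x))).const_add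
      (∫ x in Icc a b, u x * p x) (x := (0:ℝ))
    simp only [← hI1] at h
    exact h
  have hdfull := hd1.add ((HD2.2.neg).const_mul η)
  -- derivative value rewriting
  have hint_lp : IntegrableOn (fun x => l x - p x) (Icc a b) :=
    integrableOn_of_bdd ((hlmeas.aemeasurable.sub hpmeas.aemeasurable).aestronglyMeasurable)
      (C := C) hlpC
  have hint_l : IntegrableOn l (Icc a b) :=
    integrableOn_of_bdd hlmeas.aestronglyMeasurable (C := C)
      (fun x hx => abs_le.2 ⟨by linarith [(hlbc x hx).1], (hlbc x hx).2⟩)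
  have hint_p : IntegrableOn p (Icc a b) :=
    integrableOn_of_bdd hpmeas (C := C)
      (fun x hx => abs_le.2 ⟨by linarith [(hpbc x hx).1], (hpbc x hx).2⟩)
  have hlint1 : (∫ x in Icc a b, l x) = 1 := by
    simp only [hld]
    rw [integral_div, div_self hZpos.ne']
  have hlp0 : (∫ x in Icc a b, l x - p x) = 0 := by
    rw [integral_sub hint_l hint_p, hlint1, hpint, sub_self]
  have hlogl_bd : ∀ x ∈ Icc a b, |Real.log (l x)| ≤ L := fun x hx =>
    hlogbd _ (by linarith [(hlbc x hx).1, hc]) (by linarith [(hlbc x hx).2, hCpos])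
  have hlogp_bd : ∀ x ∈ Icc a b, |Real.log (p x)| ≤ L := fun x hx =>
    hlogbd _ (by linarith [(hpbc x hx).1, hc]) (by linarith [(hpbc x hx).2, hCpos])
  have hloglam : AEMeasurable (fun x => Real.log (l x)) (volume.restrict (Icc a b)) :=
    (Real.measurable_log.comp hlmeas).aemeasurable
  have hlogpam : AEMeasurable (fun x => Real.log (p x)) (volume.restrict (Icc a b)) :=
    Real.measurable_log.comp_aemeasurable hpmeas.aemeasurable
  have hint_lp_logl : IntegrableOn (fun x => (l x - p x) * Real.log (l x)) (Icc a b) := by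
    apply integrableOn_of_bdd
      (((hlmeas.aemeasurable.sub hpmeas.aemeasurable).mul hloglam).aestronglyMeasurable)
      (C := C * L)
    intro x hx
    rw [Pi.mul_apply, abs_mul]
    exact mul_le_mul (hlpC x hx) (hlogl_bd x hx) (abs_nonneg _) hCpos.le
  have hint_lp_logp : IntegrableOn (fun x => (l x - p x) * Real.log (p x)) (Icc a b) := by
    apply integrableOn_of_bdd
      (((hlmeas.aemeasurable.sub hpmeas.aemeasurable).mul hlogpam).aestronglyMeasurable)
      (C := C * L)
    intro x hx
    rw [Pi.mul_apply, abs_mul]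
    exact mul_le_mul (hlpC x hx) (hlogp_bd x hx) (abs_nonneg _) hCpos.le
  have hint_g : IntegrableOn
      (fun x => (l x - p x) * (Real.log (l x) - Real.log (p x))) (Icc a b) := by
    have : (fun x => (l x - p x) * (Real.log (l x) - Real.log (p x)))
        = fun x => (l x - p x) * Real.log (l x) - (l x - p x) * Real.log (p x) := by
      funext x; ring
    rw [this]
    exact hint_lp_logl.sub hint_lp_logp
  have hlog_l : ∀ x ∈ Icc a b, Real.log (l x) = u x / η - Real.log Z := by
    intro x hx
    rw [hld, Real.log_div (Real.exp_ne_zero _) hZpos.ne', Real.log_exp]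
  -- ∫ u (l - p) = η ∫ (l-p) log l
  have hup_eq : (∫ x in Icc a b, u x * (l x - p x))
      = η * ∫ x in Icc a b, (l x - p x) * Real.log (l x) := by
    have heq : ∀ x ∈ Icc a b, u x * (l x - p x)
        = η * ((l x - p x) * Real.log (l x)) + (η * Real.log Z) * (l x - p x) := by
      intro x hx
      have hu : u x = η * Real.log (l x) + η * Real.log Z := by
        rw [hlog_l x hx]; field_simp; ring
      rw [hu]; ring
    rw [setIntegral_congr_fun measurableSet_Icc heq,
      integral_add (hint_lp_logl.const_mul η) (hint_lp.const_mul _),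
      integral_const_mul, integral_const_mul, hlp0]
    ring
  have hF'0_eq : (∫ x in Icc a b, (l x - p x) * (Real.log (p x + 0 * (l x - p x)) + 1))
      = ∫ x in Icc a b, (l x - p x) * Real.log (p x) := by
    have heq : ∀ x ∈ Icc a b, (l x - p x) * (Real.log (p x + 0 * (l x - p x)) + 1)
        = (l x - p x) * Real.log (p x) + (l x - p x) := by
      intro x hx; norm_num; ring
    rw [setIntegral_congr_fun measurableSet_Icc heq,
      integral_add hint_lp_logp hint_lp, hlp0, add_zero]
  -- KL sum
  have hsum : klDiv' a b l p + klDiv' a b p l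
      = ∫ x in Icc a b, (l x - p x) * (Real.log (l x) - Real.log (p x)) := by
    have hint1 : IntegrableOn (fun x => l x * Real.log (l x / p x)) (Icc a b) := by
      apply integrableOn_of_bdd
        ((hlmeas.aemeasurable.mul (Real.measurable_log.comp_aemeasurable
          (hlmeas.aemeasurable.div hpmeas.aemeasurable))).aestronglyMeasurable)
        (C := C * (L + L))
      intro x hx
      have hlp : 0 < p x := lt_of_lt_of_le hc (hpbc x hx).1
      have hll : 0 < l x := lt_of_lt_of_le hc (hlbc x hx).1
      simp only [Function.comp, Pi.mul_apply, Pi.div_apply, abs_mul, Real.log_div hll.ne' hlp.ne']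
      refine mul_le_mul (abs_le.2 ⟨by linarith [(hlbc x hx).1], (hlbc x hx).2⟩)
        (le_trans (abs_sub _ _) ?_) (abs_nonneg _) hCpos.le
      exact add_le_add (hlogl_bd x hx) (hlogp_bd x hx)
    have hint2 : IntegrableOn (fun x => p x * Real.log (p x / l x)) (Icc a b) := by
      apply integrableOn_of_bdd
        ((hpmeas.aemeasurable.mul (Real.measurable_log.comp_aemeasurable
          (hpmeas.aemeasurable.div hlmeas.aemeasurable))).aestronglyMeasurable)
        (C := C * (L + L))
      intro x hx
      have hlp : 0 < p x := lt_of_lt_of_le hc (hpbc x hx).1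
      have hll : 0 < l x := lt_of_lt_of_le hc (hlbc x hx).1
      simp only [Function.comp, Pi.mul_apply, Pi.div_apply, abs_mul, Real.log_div hlp.ne' hll.ne']
      refine mul_le_mul (abs_le.2 ⟨by linarith [(hpbc x hx).1], (hpbc x hx).2⟩)
        (le_trans (abs_sub _ _) ?_) (abs_nonneg _) hCpos.le
      exact add_le_add (hlogp_bd x hx) (hlogl_bd x hx)
    rw [klDiv', klDiv', ← integral_add hint1 hint2]
    apply setIntegral_congr_fun measurableSet_Icc
    intro x hx
    have hlp : 0 < p x := lt_of_lt_of_le hc (hpbc x hx).1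
    have hll : 0 < l x := lt_of_lt_of_le hc (hlbc x hx).1
    simp only
    rw [Real.log_div hll.ne' hlp.ne', Real.log_div hlp.ne' hll.ne']
    ring
  have hsplit : (∫ x in Icc a b, (l x - p x) * (Real.log (l x) - Real.log (p x)))
      = (∫ x in Icc a b, (l x - p x) * Real.log (l x))
        - ∫ x in Icc a b, (l x - p x) * Real.log (p x) := by
    rw [← integral_sub hint_lp_logl hint_lp_logp]
    exact setIntegral_congr_fun measurableSet_Icc (fun x hx => by ring)
  have hder_eq : (∫ x in Icc a b, u x * (l x - p x))
      + η * -(∫ x in Icc a b, (l x - p x) * (Real.log (p x + 0 * (l x - p x)) + 1))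
      = η * (klDiv' a b l p + klDiv' a b p l) := by
    rw [hup_eq, hF'0_eq, hsum, hsplit]
    ring
  refine ⟨hder_eq ▸ hdfull, ?_, ?_⟩
  · rw [hsum]
    refine mul_nonneg hη.le (setIntegral_nonneg measurableSet_Icc fun x hx => ?_)
    have hlp : 0 < p x := lt_of_lt_of_le hc (hpbc x hx).1
    have hll : 0 < l x := lt_of_lt_of_le hc (hlbc x hx).1
    rcases le_total (p x) (l x) with h | h
    · exact mul_nonneg (by linarith) (sub_nonneg.2 (Real.log_le_log hlp h))
    · have h2 := sub_nonpos.2 (Real.log_le_log hll h)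
      have h3 := mul_nonneg (neg_nonneg.2 (sub_nonpos.2 h : l x - p x ≤ 0)) (neg_nonneg.2 h2)
      rw [neg_mul_neg] at h3; exact h3
  · rw [hsum]
    have hnn : 0 ≤ᵐ[volume.restrict (Icc a b)]
        fun x => (l x - p x) * (Real.log (l x) - Real.log (p x)) := by
      refine (ae_restrict_iff' measurableSet_Icc).2 (ae_of_all _ fun x hx => ?_)
      have hlp : 0 < p x := lt_of_lt_of_le hc (hpbc x hx).1
      have hll : 0 < l x := lt_of_lt_of_le hc (hlbc x hx).1
      rcases le_total (p x) (l x) with h | h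
      · exact mul_nonneg (by linarith) (sub_nonneg.2 (Real.log_le_log hlp h))
      · have h2 := sub_nonpos.2 (Real.log_le_log hll h)
        have h3 := mul_nonneg (neg_nonneg.2 (sub_nonpos.2 h : l x - p x ≤ 0)) (neg_nonneg.2 h2)
        rw [neg_mul_neg] at h3; exact h3
    constructor
    · intro h0
      have hJ0 : (∫ x in Icc a b, (l x - p x) * (Real.log (l x) - Real.log (p x))) = 0 := by
        rcases mul_eq_zero.1 h0 with h | h
        · exact absurd h hη.ne'
        · exact h
      have hae0 := (integral_eq_zero_iff_of_nonneg_ae hnn hint_g).1 hJ0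
      filter_upwards [hae0, ae_restrict_mem measurableSet_Icc] with x hg hx
      have hlp : 0 < p x := lt_of_lt_of_le hc (hpbc x hx).1
      have hll : 0 < l x := lt_of_lt_of_le hc (hlbc x hx).1
      by_contra hne
      rcases lt_or_gt_of_ne hne with h | h
      · have h1 : 0 < l x - p x := by linarith
        have h2 : 0 < Real.log (l x) - Real.log (p x) :=
          sub_pos.2 (Real.log_lt_log hlp h)
        exact absurd hg (ne_of_gt (mul_pos h1 h2))
      · have h1 : l x - p x < 0 := by linarith
        have h2 : Real.log (l x) - Real.log (p x) < 0 :=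
          sub_neg.2 (Real.log_lt_log hll h)
        exact absurd hg (ne_of_gt (mul_pos_of_neg_of_neg h1 h2))
    · intro hpe
      have hae0 : (fun x => (l x - p x) * (Real.log (l x) - Real.log (p x)))
          =ᵐ[volume.restrict (Icc a b)] 0 := by
        filter_upwards [hpe] with x hx
        simp [hx]
      have h0 : (∫ x in Icc a b, (l x - p x) * (Real.log (l x) - Real.log (p x))) = 0 := by
        rw [integral_congr_ae hae0]; simp
      rw [h0, mul_zero]
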